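/- Let X(C) be the cubelike graph with connection set C ⊆ ℤ₂ⁿ, let σ be the sum of the elements of C, and let H(t) be the transition matrix of X(C). Then H(π/2) = i^{|C|} · P_σ. -/

import Mathlib

open Matrix Complex Nat

/-- Adjacency matrix of the cubelike graph `X(C)` over `ℤ₂ⁿ`:
`x, y` adjacent iff `x + y ∈ C`. -/
noncomputable def cubeAdj {n : ℕ} (C : Set (Fin n → ZMod 2)) :
    Matrix (Fin n → ZMod 2) (Fin n → ZMod 2) ℂ :=
  Matrix.of fun x y => C.indicator (fun _ => (1 : ℂ)) (x + y)

/-- `P_u`: the permutation matrix of the translation `x ↦ x + u`. -/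
def permMatrix {V : Type*} [AddGroup V] [DecidableEq V] (u : V) : Matrix V V ℂ :=
  Matrix.of fun x y => if y = x + u then 1 else 0

/-- Transition matrix `H(t) = exp(i t A)` of a graph with adjacency matrix `A`. -/
noncomputable def transitionM {V : Type*} [Fintype V] [DecidableEq V]
    (A : Matrix V V ℂ) (t : ℝ) : Matrix V V ℂ :=
  NormedSpace.exp ((Complex.I * (t : ℂ)) • A)

set_option linter.unusedSectionVars false

section aux

variable {V : Type*} [AddCommGroup V] [Fintype V] [DecidableEq V]

lemma permMatrix_zero : permMatrix (0 : V) = 1 := by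
  ext x y
  simp [permMatrix, Matrix.one_apply, eq_comm]

lemma permMatrix_mul (u v : V) :
    permMatrix u * permMatrix v = permMatrix (u + v) := by
  ext x y
  simp only [permMatrix, Matrix.mul_apply, Matrix.of_apply]
  rw [Finset.sum_eq_single (x + u)]
  · simp [add_assoc]
  · intro b _ hb
    rw [if_neg hb, zero_mul]
  · simp

lemma permMatrix_comm (u v : V) : Commute (permMatrix u) (permMatrix v) := by
  unfold Commute SemiconjBy
  rw [_root_.permMatrix_mul, _root_.permMatrix_mul, add_comm]

end aux

set_option maxHeartbeats 1000000 in
lemma exp_I_pi_div_two_smul {V : Type*} [Fintype V] [DecidableEq V]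
    (P : Matrix V V ℂ) (h : P * P = 1) :
    NormedSpace.exp ((Complex.I * ((Real.pi / 2 : ℝ) : ℂ)) • P) = Complex.I • P := by
  set z : ℂ := Complex.I * ((Real.pi / 2 : ℝ) : ℂ) with hz
  set f : ℕ → Matrix V V ℂ := fun n => ((n ! : ℂ)⁻¹) • (z • P) ^ n with hfdef
  have hpow : ∀ k : ℕ, P ^ (2 * k) = 1 := by
    intro k
    rw [pow_mul]
    have : P ^ 2 = 1 := by rw [sq, h]
    rw [this, one_pow]
  have hf : ∀ n : ℕ, ((n ! : ℂ)⁻¹) • (z • P) ^ n = ((n ! : ℂ)⁻¹ * z ^ n) • P ^ n := by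
    intro n
    rw [smul_pow, smul_smul]
  -- even part
  have he : HasSum (fun k : ℕ => f (2 * k)) ((0 : ℂ) • (1 : Matrix V V ℂ)) := by
    have hcos := (Complex.hasSum_cos ((Real.pi / 2 : ℝ) : ℂ)).smul_const (1 : Matrix V V ℂ)
    rw [show Complex.cos ((Real.pi / 2 : ℝ) : ℂ) = 0 by
      rw [← Complex.ofReal_cos, Real.cos_pi_div_two, Complex.ofReal_zero]] at hcos
    convert hcos using 2 with k
    rw [hfdef]
    simp only []
    rw [smul_pow, smul_smul, hpow, hz]
    congr 1
    rw [mul_pow, pow_mul, Complex.I_sq]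
    field_simp
  have ho : HasSum (fun k : ℕ => f (2 * k + 1)) (Complex.I • P) := by
    have hsin := ((Complex.hasSum_sin ((Real.pi / 2 : ℝ) : ℂ)).mul_left Complex.I).smul_const P
    rw [show Complex.sin ((Real.pi / 2 : ℝ) : ℂ) = 1 by
      rw [← Complex.ofReal_sin, Real.sin_pi_div_two, Complex.ofReal_one], mul_one] at hsin
    convert hsin using 2 with k
    rw [hfdef]
    simp only []
    rw [smul_pow, smul_smul]
    have hP : P ^ (2 * k + 1) = P := by rw [pow_succ, hpow, one_mul]
    rw [hP, hz]
    congr 1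
    rw [mul_pow, pow_succ, pow_mul, Complex.I_sq]
    field_simp
  have := he.even_add_odd ho
  rw [zero_smul, zero_add] at this
  rw [NormedSpace.exp_eq_tsum (𝕂 := ℂ)]
  exact (hfdef ▸ this).tsum_eq

lemma two_smul_self {n : ℕ} (v : Fin n → ZMod 2) : v + v = 0 := by
  funext i
  exact CharTwo.add_self_eq_zero (v i)

lemma cubeAdj_eq_sum {n : ℕ} (C : Finset (Fin n → ZMod 2)) :
    cubeAdj (↑C : Set (Fin n → ZMod 2)) = ∑ c ∈ C, permMatrix c := by
  ext x y
  simp only [cubeAdj, Matrix.of_apply, Matrix.sum_apply, permMatrix]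
  have hiff : ∀ c : Fin n → ZMod 2, (y = x + c) ↔ (c = x + y) := by
    intro c
    constructor
    · rintro rfl
      rw [← add_assoc, two_smul_self, zero_add]
    · rintro rfl
      rw [← add_assoc, two_smul_self, zero_add]
  simp only [hiff]
  rw [Finset.sum_ite_eq' C (x + y) (fun _ => (1 : ℂ))]
  by_cases hmem : x + y ∈ C <;> simp [Set.indicator, hmem]

lemma exp_sum_perm {n : ℕ} (C : Finset (Fin n → ZMod 2)) :
    NormedSpace.exp ((Complex.I * ((Real.pi / 2 : ℝ) : ℂ)) • ∑ c ∈ C, permMatrix c)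
      = (Complex.I ^ C.card) • permMatrix (∑ u ∈ C, u) := by
  induction C using Finset.induction with
  | empty =>
      simp only [Finset.sum_empty, smul_zero, NormedSpace.exp_zero, Finset.card_empty, pow_zero,
        permMatrix_zero, one_smul]
  | @insert a s ha ih =>
      rw [Finset.sum_insert ha, smul_add]
      have hcomm : Commute ((Complex.I * ((Real.pi / 2 : ℝ) : ℂ)) • permMatrix a)
          ((Complex.I * ((Real.pi / 2 : ℝ) : ℂ)) • ∑ c ∈ s, permMatrix c) := by
        apply Commute.smul_left
        apply Commute.smul_right
        exact Commute.sum_right _ _ _ (fun c _ => permMatrix_comm a c)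
      rw [Matrix.exp_add_of_commute _ _ hcomm, ih]
      have hPa : permMatrix a * permMatrix a = (1 : Matrix (Fin n → ZMod 2) _ ℂ) := by
        rw [_root_.permMatrix_mul, two_smul_self, permMatrix_zero]
      rw [exp_I_pi_div_two_smul _ hPa]
      rw [smul_mul_assoc, Matrix.mul_smul, _root_.permMatrix_mul, Finset.card_insert_of_notMem ha,
        Finset.sum_insert ha, smul_smul, pow_succ, mul_comm]

/-- Let `X(C)` be the cubelike graph with connection set `C ⊆ ℤ₂ⁿ`, let `σ` be
the sum of the elements of `C`, and let `H(t)` be the transition matrix of `X(C)`.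
Then `H(π/2) = i^{|C|} • P_σ`. -/
theorem transition_cubelike_pi_div_two {n : ℕ} (C : Finset (Fin n → ZMod 2)) :
    transitionM (cubeAdj (↑C : Set (Fin n → ZMod 2))) (Real.pi / 2) =
      (Complex.I ^ C.card) • permMatrix (∑ u ∈ C, u) := by
  rw [transitionM, cubeAdj_eq_sum, exp_sum_perm]
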